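/- Suppose (λ*,μ*) ∈ D is a critical point of G_X(λ,μ) = Xᵀ M_{λ,μ}^{−1} X, i.e., ∇G_X(λ*,μ*) = 0. Then Y* = M_{λ*,μ*}^{−1} X satisfies the constraints Y*ᵀ A Y* = 0 and Y*ᵀ B Y* = 0, i.e., Y* lies in the correction manifold V = {Y ∈ ℝ⁸ : YᵀAY = YᵀBY = 0}. -/

import Mathlib

open Matrix

/-- The 8×8 matrix `A = diag(S, -S, S, -S)` with `S = [[1,0],[0,0]]`. -/
noncomputable def A : Matrix (Fin 8) (Fin 8) ℝ :=
  !![1,0,0,0,0,0,0,0;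
     0,0,0,0,0,0,0,0;
     0,0,-1,0,0,0,0,0;
     0,0,0,0,0,0,0,0;
     0,0,0,0,1,0,0,0;
     0,0,0,0,0,0,0,0;
     0,0,0,0,0,0,-1,0;
     0,0,0,0,0,0,0,0]

/-- The 8×8 matrix `B = diag(T, -T, T, -T)` with `T = [[0,1],[1,0]]`. -/
noncomputable def B : Matrix (Fin 8) (Fin 8) ℝ :=
  !![0,1,0,0,0,0,0,0;
     1,0,0,0,0,0,0,0;
     0,0,0,-1,0,0,0,0;
     0,0,-1,0,0,0,0,0;
     0,0,0,0,0,1,0,0;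
     0,0,0,0,1,0,0,0;
     0,0,0,0,0,0,0,-1;
     0,0,0,0,0,0,-1,0]

/-- The matrix `M_{λ,μ} = I + λA + μB`. -/
noncomputable def M (l m : ℝ) : Matrix (Fin 8) (Fin 8) ℝ := 1 + l • A + m • B

attribute [local instance] Matrix.linftyOpNormedRing Matrix.linftyOpNormedAlgebra

lemma hA_symm : Aᵀ = A := by
  ext i j; fin_cases i <;> fin_cases j <;> rfl

lemma hB_symm : Bᵀ = B := by
  ext i j; fin_cases i <;> fin_cases j <;> rfl

lemma hM_symm (l m : ℝ) : (M l m)ᵀ = M l m := by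
  simp [M, transpose_add, transpose_smul, hA_symm, hB_symm]

/-- At a critical point of `G_X`, the vector `Y* = M⁻¹X` lies in the correction manifold
`V = {Y : YᵀAY = YᵀBY = 0}`. -/
theorem critical_point_in_manifold (X : Fin 8 → ℝ) (l m : ℝ)
    (hpos : (M l m).PosDef)
    (hcrit : fderiv ℝ (fun p : ℝ × ℝ => X ⬝ᵥ ((M p.1 p.2)⁻¹).mulVec X) (l, m) = 0) :
    ((M l m)⁻¹.mulVec X) ⬝ᵥ A.mulVec ((M l m)⁻¹.mulVec X) = 0 ∧
    ((M l m)⁻¹.mulVec X) ⬝ᵥ B.mulVec ((M l m)⁻¹.mulVec X) = 0 := by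
  
  classical
  have hU : IsUnit (M l m) := hpos.isUnit
  set u : (Matrix (Fin 8) (Fin 8) ℝ)ˣ := hU.unit with hu
  let φ : Matrix (Fin 8) (Fin 8) ℝ →ₗ[ℝ] ℝ :=
    { toFun := fun N => X ⬝ᵥ N.mulVec X
      map_add' := fun N P => by simp [Matrix.add_mulVec]
      map_smul' := fun c N => by simp [Matrix.smul_mulVec] }
  let ψ : (ℝ × ℝ) →ₗ[ℝ] Matrix (Fin 8) (Fin 8) ℝ :=
    { toFun := fun p => p.1 • A + p.2 • B
      map_add' := fun p q => by simp [add_smul]; module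
      map_smul' := fun c p => by simp [smul_smul, smul_add] }
  have hψ : HasFDerivAt (fun p : ℝ × ℝ => M p.1 p.2) ψ.toContinuousLinearMap (l, m) := by
    have h1 : HasFDerivAt (fun p : ℝ × ℝ => (1 : Matrix (Fin 8) (Fin 8) ℝ) + ψ.toContinuousLinearMap p)
        ψ.toContinuousLinearMap (l, m) := ψ.toContinuousLinearMap.hasFDerivAt.const_add 1
    convert h1 using 2 with p
    simp [M, ψ, add_assoc]
  have hinv : HasFDerivAt (Ring.inverse : Matrix (Fin 8) (Fin 8) ℝ → _)
      (-(ContinuousLinearMap.mulLeftRight ℝ _ (↑u⁻¹) (↑u⁻¹))) (M l m) := by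
    have := hasFDerivAt_ringInverse (𝕜 := ℝ) u
    rwa [hu, IsUnit.unit_spec] at this
  have hcomp : HasFDerivAt (fun p : ℝ × ℝ => X ⬝ᵥ ((M p.1 p.2)⁻¹).mulVec X)
      (φ.toContinuousLinearMap.comp
        ((-(ContinuousLinearMap.mulLeftRight ℝ _ (↑u⁻¹) (↑u⁻¹))).comp
          ψ.toContinuousLinearMap)) (l, m) := by
    have h2 : HasFDerivAt (fun p : ℝ × ℝ => Ring.inverse (M p.1 p.2))
        ((-(ContinuousLinearMap.mulLeftRight ℝ _ (↑u⁻¹) (↑u⁻¹))).comp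
          ψ.toContinuousLinearMap) (l, m) := by
      have h3 := HasFDerivAt.comp ((l, m) : ℝ × ℝ) hinv hψ
      exact h3
    have h := HasFDerivAt.comp ((l, m) : ℝ × ℝ) φ.toContinuousLinearMap.hasFDerivAt h2
    refine HasFDerivAt.congr_of_eventuallyEq h (Filter.Eventually.of_forall fun p => ?_)
    simp [φ, Matrix.nonsing_inv_eq_ringInverse]
  have hL : (φ.toContinuousLinearMap.comp
        ((-(ContinuousLinearMap.mulLeftRight ℝ _ (↑u⁻¹) (↑u⁻¹))).comp
          ψ.toContinuousLinearMap)) = 0 := by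
    rw [← hcomp.fderiv]; exact hcrit
  have hui : (↑u⁻¹ : Matrix (Fin 8) (Fin 8) ℝ) = (M l m)⁻¹ := by
    rw [Matrix.coe_units_inv, hu, IsUnit.unit_spec]
  have hMi_symm : ((M l m)⁻¹)ᵀ = (M l m)⁻¹ := by
    rw [Matrix.transpose_nonsing_inv, hM_symm]
  have key : ∀ C : Matrix (Fin 8) (Fin 8) ℝ,
      X ⬝ᵥ ((M l m)⁻¹ * C * (M l m)⁻¹).mulVec X
        = ((M l m)⁻¹.mulVec X) ⬝ᵥ C.mulVec ((M l m)⁻¹.mulVec X) := by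
    intro C
    rw [← Matrix.mulVec_mulVec, ← Matrix.mulVec_mulVec,
      Matrix.dotProduct_mulVec, ← Matrix.mulVec_transpose, hMi_symm]
  constructor
  · have h1 : X ⬝ᵥ (-((↑u⁻¹ : Matrix (Fin 8) (Fin 8) ℝ) * ((1:ℝ) • A + (0:ℝ) • B) * (↑u⁻¹ : Matrix (Fin 8) (Fin 8) ℝ))).mulVec X = 0 :=
      DFunLike.congr_fun hL (1, 0)
    simp [φ, ψ, ContinuousLinearMap.mulLeftRight_apply, hui, neg_mulVec, dotProduct_neg] at h1
    rw [key A] at h1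
    linarith
  · have h1 : X ⬝ᵥ (-((↑u⁻¹ : Matrix (Fin 8) (Fin 8) ℝ) * ((0:ℝ) • A + (1:ℝ) • B) * (↑u⁻¹ : Matrix (Fin 8) (Fin 8) ℝ))).mulVec X = 0 :=
      DFunLike.congr_fun hL (0, 1)
    simp [φ, ψ, ContinuousLinearMap.mulLeftRight_apply, hui, neg_mulVec, dotProduct_neg] at h1
    rw [key B] at h1
    linarith
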